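/- Let G be a finite abelian group and T' ⊆ G a tile. If L ⊆ Ĝ satisfies #L · #T' = #G and (L−L) ∩ Z(χ̂_{T'}) = ∅ (differences of distinct elements avoid the Fourier zero set of T'), then for every spectrum Q of T' the pair L + Q = Ĝ is a tiling of the dual group (L is a universal tiling complement of all spectra of T'). -/
import Mathlib

open scoped BigOperators

/-- If `T'` tiles the finite abelian group `G` and `L ⊆ Ĝ` satisfies
`#L · #T' = #G` with quotients of distinct elements of `L` avoiding the zero set of
`χ̂_{T'}`, then for every spectrum `Q` of `T'` the pair `L + Q = Ĝ` is a tiling of the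
dual group: every character factors uniquely as a product of an element of `L` and an
element of `Q`. -/
theorem stmt7 (G : Type*) [AddCommGroup G] [Fintype G]
    (T' : Finset G)
    (htile : ∃ T : Finset G, ∀ g : G, ∃! p : G × G, p.1 ∈ T' ∧ p.2 ∈ T ∧ p.1 + p.2 = g)
    (L : Finset (AddChar G ℂ))
    (hcard : L.card * T'.card = Fintype.card G)
    (hzero : ∀ lam ∈ L, ∀ mu ∈ L, lam ≠ mu → ∑ x ∈ T', (lam * mu⁻¹) x ≠ 0) :
    ∀ Q : Finset (AddChar G ℂ),
      (Q.card = T'.card ∧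
        ∀ lam ∈ Q, ∀ mu ∈ Q, lam ≠ mu → ∑ x ∈ T', (lam * mu⁻¹) x = 0) →
      ∀ χ : AddChar G ℂ,
        ∃! p : AddChar G ℂ × AddChar G ℂ, p.1 ∈ L ∧ p.2 ∈ Q ∧ p.1 * p.2 = χ := by
  classical
  rintro Q ⟨hQcard, hQ⟩ χ
  -- injectivity of (l, q) ↦ l * q on L ×ˢ Q
  have hinj : Set.InjOn (fun p : AddChar G ℂ × AddChar G ℂ => p.1 * p.2)
      ↑(L ×ˢ Q) := by
    rintro ⟨l₁, q₁⟩ hp ⟨l₂, q₂⟩ hp' h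
    simp only [Finset.coe_product, Set.mem_prod, Finset.mem_coe] at hp hp'
    simp only at h
    have hl : l₁ = l₂ := by
      by_contra hne
      have hq : q₁ ≠ q₂ := by
        rintro rfl
        exact hne (mul_right_cancel h)
      have key : l₁ * l₂⁻¹ = q₂ * q₁⁻¹ := by
        rw [← div_eq_mul_inv, ← div_eq_mul_inv, div_eq_div_iff_mul_eq_mul, h, mul_comm]
      have h1 := hzero l₁ hp.1 l₂ hp'.1 hne
      have h2 := hQ q₂ hp'.2 q₁ hp.2 hq.symm
      rw [key] at h1
      exact h1 h2
    subst hl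
    have : q₁ = q₂ := mul_left_cancel h
    simp [this]
  -- cardinality: the image is all of the dual group
  have himg : (L ×ˢ Q).image (fun p => p.1 * p.2) = Finset.univ := by
    apply Finset.eq_univ_of_card
    rw [Finset.card_image_of_injOn hinj, Finset.card_product, hQcard,
      AddChar.card_eq]
    exact hcard
  have hχ : χ ∈ (L ×ˢ Q).image (fun p => p.1 * p.2) := by
    rw [himg]; exact Finset.mem_univ χ
  obtain ⟨p, hp, hpe⟩ := Finset.mem_image.mp hχ
  rw [Finset.mem_product] at hp
  refine ⟨p, ⟨hp.1, hp.2, hpe⟩, ?_⟩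
  rintro ⟨l, q⟩ ⟨hl, hq, he⟩
  apply hinj
  · simp [hl, hq]
  · simp [Finset.mem_product.mp, hp.1, hp.2]
  · simp only
    rw [he, hpe]
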